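/- Let G = ⟨a₁, b₁, a₂ | a₁b₁a₁⁻¹ = b₁⁻¹, a₂² = a₁^{2r} b₁^s, a₂ a₁^{2t} b₁^u a₂⁻¹ = b₁^{-u} a₁^{-2t}⟩. The quotient of G by the normal closure of the subgroup generated by a₁² and b₁ is isomorphic to the infinite dihedral group ℤ₂ * ℤ₂ = ⟨ā₁, ā₂ | ā₁² = ā₂² = 1⟩. -/

import Mathlib

/-- The defining relators of the fundamental group of the sapphire `K(r,s,t,u)`:
`a₁b₁a₁⁻¹ = b₁⁻¹`, `a₂² = a₁^{2r} b₁^s`, `a₂ a₁^{2t} b₁^u a₂⁻¹ = b₁^{-u} a₁^{-2t}`. -/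
def sapphireRels (r s t u : ℤ) : Set (FreeGroup (Fin 3)) :=
  {FreeGroup.of 0 * FreeGroup.of 1 * (FreeGroup.of 0)⁻¹ * FreeGroup.of 1,
   (FreeGroup.of 2) ^ 2 * ((FreeGroup.of 0) ^ (2 * r) * (FreeGroup.of 1) ^ s)⁻¹,
   FreeGroup.of 2 * (FreeGroup.of 0) ^ (2 * t) * (FreeGroup.of 1) ^ u * (FreeGroup.of 2)⁻¹ *
     ((FreeGroup.of 1) ^ (-u) * (FreeGroup.of 0) ^ (-(2 * t)))⁻¹}

/-- The infinite dihedral group ℤ₂ * ℤ₂ = ⟨ā₁, ā₂ ∣ ā₁² = ā₂² = 1⟩ as a presented group. -/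
def infDihedralRels : Set (FreeGroup (Fin 2)) :=
  {(FreeGroup.of 0) ^ 2, (FreeGroup.of 1) ^ 2}

namespace Stmt9Aux

lemma rel_of_mem {α : Type*} {rels : Set (FreeGroup α)} {x : FreeGroup α} (hx : x ∈ rels) :
    PresentedGroup.mk rels x = 1 :=
  (QuotientGroup.eq_one_iff _).mpr (Subgroup.subset_normalClosure hx)

lemma D0_sq : (PresentedGroup.of 0 : PresentedGroup infDihedralRels) ^ 2 = 1 := by
  have := rel_of_mem (rels := infDihedralRels) (x := (FreeGroup.of 0) ^ 2)
    (by left; rfl)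
  simpa [PresentedGroup.of] using this

lemma D1_sq : (PresentedGroup.of 1 : PresentedGroup infDihedralRels) ^ 2 = 1 := by
  have := rel_of_mem (rels := infDihedralRels) (x := (FreeGroup.of 1) ^ 2)
    (by right; rfl)
  simpa [PresentedGroup.of] using this

variable (r s t u : ℤ)

abbrev G := PresentedGroup (sapphireRels r s t u)
abbrev D := PresentedGroup infDihedralRels

abbrev S : Set (G r s t u) := {(PresentedGroup.of 0) ^ 2, PresentedGroup.of 1}
abbrev N : Subgroup (G r s t u) := Subgroup.normalClosure (S r s t u)
abbrev Q := G r s t u ⧸ N r s t u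

def f : Fin 3 → D := ![PresentedGroup.of 0, 1, PresentedGroup.of 1]

lemma f_rels : ∀ x ∈ sapphireRels r s t u, FreeGroup.lift (f) x = 1 := by
  intro x hx
  have h0 : FreeGroup.lift f (FreeGroup.of (0 : Fin 3)) = (PresentedGroup.of 0 : D) := by
    simp [f]
  have h1 : FreeGroup.lift f (FreeGroup.of (1 : Fin 3)) = (1 : D) := by simp [f]
  have h2 : FreeGroup.lift f (FreeGroup.of (2 : Fin 3)) = (PresentedGroup.of 1 : D) := by
    simp [f]
  have hsq : (PresentedGroup.of (0 : Fin 2) : D) ^ (2 : ℤ) = 1 := by exact_mod_cast D0_sq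
  have e0 : ∀ k : ℤ, (PresentedGroup.of (0 : Fin 2) : D) ^ (2 * k) = 1 := by
    intro k
    rw [zpow_mul, hsq, one_zpow]
  rcases hx with h | h | h <;> subst h <;>
    simp [map_mul, map_inv, map_zpow, h0, h1, h2, e0]
  · simpa using D1_sq

def phi0 : G r s t u →* D := PresentedGroup.toGroup (f_rels r s t u)

lemma N_le_ker : N r s t u ≤ (phi0 r s t u).ker := by
  apply Subgroup.normalClosure_le_normal
  rintro x (h | h) <;> subst h <;>
    simp only [SetLike.mem_coe, MonoidHom.mem_ker, map_pow, phi0]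
  · rw [PresentedGroup.toGroup.of]
    simpa [f] using D0_sq
  · rw [PresentedGroup.toGroup.of]
    simp [f]

def phi : Q r s t u →* D := QuotientGroup.lift _ (phi0 r s t u) (N_le_ker r s t u)

def g : Fin 2 → Q r s t u :=
  ![QuotientGroup.mk (PresentedGroup.of 0), QuotientGroup.mk (PresentedGroup.of 2)]

lemma mem_N_of_mem_S {x : G r s t u} (h : x ∈ S r s t u) : x ∈ N r s t u :=
  Subgroup.subset_normalClosure h

lemma g_rels : ∀ x ∈ infDihedralRels, FreeGroup.lift (g r s t u) x = 1 := by
  rintro x (h | h) <;> subst h <;> simp only [map_pow, FreeGroup.lift_apply_of, g]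
  · show (QuotientGroup.mk (PresentedGroup.of 0 : G r s t u)) ^ 2 = 1
    rw [← QuotientGroup.mk_pow, QuotientGroup.eq_one_iff]
    exact mem_N_of_mem_S r s t u (by left; rfl)
  · show (QuotientGroup.mk (PresentedGroup.of 2 : G r s t u)) ^ 2 = 1
    rw [← QuotientGroup.mk_pow, QuotientGroup.eq_one_iff]
    -- of 2 ^ 2 = of 0 ^ (2r) * of 1 ^ s in G
    have hrel : (PresentedGroup.of 2 : G r s t u) ^ 2 =
        (PresentedGroup.of 0) ^ (2 * r) * (PresentedGroup.of 1) ^ s := by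
      have := rel_of_mem (rels := sapphireRels r s t u)
        (x := (FreeGroup.of 2) ^ 2 * ((FreeGroup.of 0) ^ (2 * r) * (FreeGroup.of 1) ^ s)⁻¹)
        (by right; left; rfl)
      have h2 := mul_eq_one_iff_eq_inv.mp (by simpa [map_mul, map_inv, map_pow, map_zpow] using this)
      simpa [PresentedGroup.of] using h2
    rw [hrel]
    have hm0 : ((PresentedGroup.of 0 : G r s t u)) ^ (2 * r) ∈ N r s t u := by
      rw [zpow_mul]
      have : ((PresentedGroup.of 0 : G r s t u)) ^ (2 : ℤ) ∈ N r s t u := by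
        exact_mod_cast mem_N_of_mem_S r s t u (by left; rfl)
      exact zpow_mem this r
    have hm1 : ((PresentedGroup.of 1 : G r s t u)) ^ s ∈ N r s t u :=
      zpow_mem (mem_N_of_mem_S r s t u (by right; rfl)) s
    exact mul_mem hm0 hm1

def psi : D →* Q r s t u := PresentedGroup.toGroup (g_rels r s t u)

lemma psi_phi : (psi r s t u).comp (phi r s t u) = MonoidHom.id _ := by
  have : ∀ x : Q r s t u, (psi r s t u) ((phi r s t u) x) = x := by
    intro x
    induction x using QuotientGroup.induction_on with
    | H z =>
      show ((psi r s t u).comp ((phi0 r s t u))) z = QuotientGroup.mk' (N r s t u) z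
      have : (psi r s t u).comp (phi0 r s t u) = (QuotientGroup.mk' (N r s t u)).comp (MonoidHom.id _) := by
        apply PresentedGroup.ext
        intro i
        fin_cases i <;>
          simp only [MonoidHom.comp_apply, phi0, PresentedGroup.toGroup.of, MonoidHom.id_apply,
            QuotientGroup.mk'_apply, psi, f]
        · show psi r s t u (PresentedGroup.of 0) = _
          rw [psi, PresentedGroup.toGroup.of]; rfl
        · show psi r s t u 1 = _
          rw [map_one]
          symm
          rw [QuotientGroup.eq_one_iff]
          exact mem_N_of_mem_S r s t u (by right; rfl)
        · show psi r s t u (PresentedGroup.of 1) = _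
          rw [psi, PresentedGroup.toGroup.of]; rfl
      rw [this]; rfl
  exact MonoidHom.ext this

lemma phi_psi : (phi r s t u).comp (psi r s t u) = MonoidHom.id _ := by
  apply PresentedGroup.ext
  intro i
  fin_cases i <;> simp only [MonoidHom.comp_apply, MonoidHom.id_apply]
  · show phi r s t u (psi r s t u (PresentedGroup.of 0)) = PresentedGroup.of 0
    rw [psi, PresentedGroup.toGroup.of]
    show phi0 r s t u (PresentedGroup.of 0) = _
    rw [phi0, PresentedGroup.toGroup.of]
    rfl
  · show phi r s t u (psi r s t u (PresentedGroup.of 1)) = PresentedGroup.of 1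
    rw [psi, PresentedGroup.toGroup.of]
    show phi0 r s t u (PresentedGroup.of 2) = _
    rw [phi0, PresentedGroup.toGroup.of]
    rfl

end Stmt9Aux

theorem stmt_9 (r s t u : ℤ) :
    Nonempty
      ((PresentedGroup (sapphireRels r s t u) ⧸
        Subgroup.normalClosure
          ({(PresentedGroup.of 0 : PresentedGroup (sapphireRels r s t u)) ^ 2,
            PresentedGroup.of 1} : Set (PresentedGroup (sapphireRels r s t u)))) ≃*
        PresentedGroup infDihedralRels) :=
  ⟨MonoidHom.toMulEquiv (Stmt9Aux.phi r s t u) (Stmt9Aux.psi r s t u)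
    (Stmt9Aux.psi_phi r s t u) (Stmt9Aux.phi_psi r s t u)⟩
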